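/- Let α be an ordinal with cf(α) > ω, and let P₁,…,Pₘ be subsets of α. Then there is a closed unbounded set J ⊆ α such that for each β < α, all structures (α, <, P₁,…,Pₘ) restricted to the interval [β, γ), for γ ∈ J with cf(γ) = ω and γ > β, satisfy the same monadic second-order sentences. -/

import Mathlib

set_option linter.unusedVariables false


/-- Monadic second-order formulas over a linear order with `m` unary predicates,
`k` free element variables and `l` free set variables (de Bruijn indexed). -/
inductive MSO (m : ℕ) : ℕ → ℕ → Type
  | lt {k l : ℕ} (i j : Fin k) : MSO m k l
  | eq {k l : ℕ} (i j : Fin k) : MSO m k l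
  | mem {k l : ℕ} (i : Fin k) (X : Fin l) : MSO m k l
  | pred {k l : ℕ} (p : Fin m) (i : Fin k) : MSO m k l
  | not {k l : ℕ} (φ : MSO m k l) : MSO m k l
  | and {k l : ℕ} (φ ψ : MSO m k l) : MSO m k l
  | exElem {k l : ℕ} (φ : MSO m (k + 1) l) : MSO m k l
  | exSet {k l : ℕ} (φ : MSO m k (l + 1)) : MSO m k l

/-- Satisfaction of an MSO formula in a linear order `α` with unary predicates `P`. -/
def MSO.Sat {m : ℕ} {α : Type*} [LinearOrder α] (P : Fin m → Set α) :
    ∀ {k l : ℕ}, MSO m k l → (Fin k → α) → (Fin l → Set α) → Prop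
  | _, _, .lt i j, e, _ => e i < e j
  | _, _, .eq i j, e, _ => e i = e j
  | _, _, .mem i X, e, s => e i ∈ s X
  | _, _, .pred p i, e, _ => e i ∈ P p
  | _, _, .not φ, e, s => ¬ φ.Sat P e s
  | _, _, .and φ ψ, e, s => φ.Sat P e s ∧ ψ.Sat P e s
  | _, _, .exElem φ, e, s => ∃ a : α, φ.Sat P (Fin.cons a e) s
  | _, _, .exSet φ, e, s => ∃ A : Set α, φ.Sat P e (Fin.cons A s)

/-- Quantifier depth of an MSO formula. -/
def MSO.depth {m : ℕ} : ∀ {k l : ℕ}, MSO m k l → ℕ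
  | _, _, .not φ => φ.depth
  | _, _, .and φ ψ => max φ.depth ψ.depth
  | _, _, .exElem φ => φ.depth + 1
  | _, _, .exSet φ => φ.depth + 1
  | _, _, _ => 0

/-- Satisfaction of an MSO sentence (no free variables). -/
def MSO.SatS {m : ℕ} {α : Type*} [LinearOrder α] (P : Fin m → Set α) (φ : MSO m 0 0) : Prop :=
  φ.Sat P (fun i => i.elim0) (fun i => i.elim0)

-- ===== auxiliary development =====
/-! ### Hintikka-style bounded-depth MSO theories -/

def TT : ℕ → ℕ → Type
  | 0, m => (Fin m → Fin m → Prop) × (Fin m → Fin m → Prop)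
  | (n+1), m => TT n m × TT n (m+1) × Set (TT n (m+1)) × Set (TT n (m+1))

open Classical in
noncomputable instance TT.fintype : ∀ n m, Fintype (TT n m)
  | 0, m => by unfold TT; infer_instance
  | (n+1), m => by
      have := TT.fintype n m; have := TT.fintype n (m+1)
      unfold TT; infer_instance

def th {α : Type*} [LinearOrder α] : ∀ (n : ℕ) {m : ℕ} (_ : Fin m → Set α), TT n m
  | 0, _, P => (fun i j => ∃ x ∈ P i, ∃ y ∈ P j, x < y, fun i j => (P i ∩ P j).Nonempty)
  | (n+1), _, P =>
    (th n P,
     th n (Fin.snoc P (∅ : Set α)),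
     {t | ∃ a : α, t = th n (Fin.snoc P ({a} : Set α))},
     {t | ∃ A : Set α, t = th n (Fin.snoc P A)})

def TT.zero : ∀ {n m}, TT n m → TT 0 m
  | 0, _, t => t
  | (n+1), _, t => TT.zero t.1

lemma th_zero {α : Type*} [LinearOrder α] : ∀ (n) {m} (P : Fin m → Set α),
    (th n P).zero = th 0 P
  | 0, _, _ => rfl
  | (n+1), _, P => th_zero n P

lemma preimage_snoc {α β : Type*} (w : β → α) {m : ℕ} (P : Fin m → Set α) (A : Set α) :
    (fun p : Fin (m+1) => w ⁻¹' ((Fin.snoc P A : Fin (m+1) → Set α) p))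
      = Fin.snoc (fun p => w ⁻¹' P p) (w ⁻¹' A) := by
  funext p
  refine Fin.lastCases ?_ ?_ p <;> simp

/-! ### Reindexing -/

def liftf {m m' : ℕ} (f : Fin m' → Fin m) : Fin (m'+1) → Fin (m+1) :=
  Fin.snoc (fun i => (f i).castSucc) (Fin.last m)

def TT.reindex : ∀ {n m m' : ℕ}, (Fin m' → Fin m) → TT n m → TT n m'
  | 0, _, _, f, t => (fun i j => t.1 (f i) (f j), fun i j => t.2 (f i) (f j))
  | (n+1), _, _, f, t =>
    (t.1.reindex f, t.2.1.reindex (liftf f),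
     TT.reindex (liftf f) '' t.2.2.1, TT.reindex (liftf f) '' t.2.2.2)

lemma snoc_comp_liftf {α : Type*} {m m' : ℕ} (f : Fin m' → Fin m) (P : Fin m → Set α)
    (A : Set α) :
    (Fin.snoc (fun i => P (f i)) A : Fin (m'+1) → Set α)
      = fun p => (Fin.snoc P A : Fin (m+1) → Set α) (liftf f p) := by
  funext p
  refine Fin.lastCases ?_ ?_ p
  · simp [liftf]
  · intro i; simp [liftf]

lemma th_reindex {α : Type*} [LinearOrder α] : ∀ (n) {m m'} (f : Fin m' → Fin m)
    (P : Fin m → Set α), th n (fun i => P (f i)) = (th n P).reindex f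
  | 0, _, _, _, _ => rfl
  | (n+1), m, m', f, P => by
    refine congrArg₂ Prod.mk ?_ (congrArg₂ Prod.mk ?_ (congrArg₂ Prod.mk ?_ ?_))
    · exact th_reindex n f P
    · rw [snoc_comp_liftf f P ∅]; exact th_reindex n (liftf f) _
    · ext t
      constructor
      · rintro ⟨a, rfl⟩
        exact ⟨th n (Fin.snoc P {a}), ⟨a, rfl⟩,
          by rw [snoc_comp_liftf f P {a}]; exact (th_reindex n (liftf f) _).symm⟩
      · rintro ⟨-, ⟨a, rfl⟩, rfl⟩
        exact ⟨a, by rw [snoc_comp_liftf f P {a}]; exact (th_reindex n (liftf f) (Fin.snoc P {a})).symm⟩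
    · ext t
      constructor
      · rintro ⟨A, rfl⟩
        exact ⟨th n (Fin.snoc P A), ⟨A, rfl⟩,
          by rw [snoc_comp_liftf f P A]; exact (th_reindex n (liftf f) _).symm⟩
      · rintro ⟨-, ⟨A, rfl⟩, rfl⟩
        exact ⟨A, by rw [snoc_comp_liftf f P A]; exact (th_reindex n (liftf f) (Fin.snoc P A)).symm⟩

/-! ### Isomorphism invariance -/

lemma th_iso {A B : Type*} [LinearOrder A] [LinearOrder B] (e : A ≃o B) :
    ∀ (n) {m} (Q : Fin m → Set B), th n (fun i => e ⁻¹' Q i) = th n Q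
  | 0, _, Q => by
      refine congrArg₂ Prod.mk ?_ ?_ <;> funext i j <;> apply propext
      · constructor
        · rintro ⟨x, hx, y, hy, hxy⟩
          exact ⟨e x, hx, e y, hy, by simpa using hxy⟩
        · rintro ⟨x, hx, y, hy, hxy⟩
          refine ⟨e.symm x, by simpa using hx, e.symm y, by simpa using hy, by simp [hxy]⟩
      · constructor
        · rintro ⟨x, hx1, hx2⟩; exact ⟨e x, hx1, hx2⟩
        · rintro ⟨y, hy1, hy2⟩
          exact ⟨e.symm y, by simpa using hy1, by simpa using hy2⟩
  | (n+1), m, Q => by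
      have pre : ∀ B₀ : Set B,
          (Fin.snoc (fun i => e ⁻¹' Q i) (e ⁻¹' B₀) : Fin (m+1) → Set A)
            = fun p => e ⁻¹' ((Fin.snoc Q B₀ : Fin (m+1) → Set B) p) := by
        intro B₀; rw [preimage_snoc (⇑e) Q B₀]
      refine congrArg₂ Prod.mk ?_ (congrArg₂ Prod.mk ?_ (congrArg₂ Prod.mk ?_ ?_))
      · exact th_iso e n Q
      · have h0 : (∅ : Set A) = e ⁻¹' (∅ : Set B) := by simp
        rw [h0, pre ∅]; exact th_iso e n _
      · ext t
        constructor
        · rintro ⟨a, rfl⟩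
          refine ⟨e a, ?_⟩
          have h1 : ({a} : Set A) = e ⁻¹' {e a} := by ext x; simp
          rw [h1, pre {e a}]
          exact th_iso e n (Fin.snoc Q {e a})
        · rintro ⟨b, rfl⟩
          refine ⟨e.symm b, ?_⟩
          have h1 : ({e.symm b} : Set A) = e ⁻¹' {b} := by
            ext x
            simp only [Set.mem_singleton_iff, Set.mem_preimage]
            exact ⟨fun h => by rw [h]; simp, fun h => by rw [← h]; simp⟩
          rw [h1, pre {b}]
          exact (th_iso e n (Fin.snoc Q {b})).symm
      · ext t
        constructor
        · rintro ⟨A₀, rfl⟩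
          refine ⟨e.symm ⁻¹' A₀, ?_⟩
          have h1 : A₀ = e ⁻¹' (e.symm ⁻¹' A₀) := by ext x; simp
          rw [show (Fin.snoc (fun i => e ⁻¹' Q i) A₀ : Fin (m+1) → Set A)
              = Fin.snoc (fun i => e ⁻¹' Q i) (e ⁻¹' (e.symm ⁻¹' A₀)) by rw [← h1]]
          rw [pre (e.symm ⁻¹' A₀)]
          exact th_iso e n (Fin.snoc Q (e.symm ⁻¹' A₀))
        · rintro ⟨B₀, rfl⟩
          exact ⟨e ⁻¹' B₀, by rw [pre B₀]; exact (th_iso e n (Fin.snoc Q B₀)).symm⟩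

/-! ### Sum / composition theorem -/

universe u v

def resP {A : Type u} (S : Set A) {m : ℕ} (P : Fin m → Set A) : Fin m → Set ↥S :=
  fun p => (Subtype.val) ⁻¹' P p

lemma resP_snoc {A : Type u} (S : Set A) {m : ℕ} (P : Fin m → Set A) (A₀ : Set A) :
    resP S (Fin.snoc P A₀) = Fin.snoc (resP S P) ((Subtype.val : ↥S → A) ⁻¹' A₀) :=
  preimage_snoc (Subtype.val : ↥S → A) P A₀

/-- Inductive hypothesis for the sum theorem. -/
def SumIH (n : ℕ) : Prop :=
  ∀ {ι : Type v} {A B : Type u} [LinearOrder ι] [LinearOrder A] [LinearOrder B]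
    (f : A → ι) (g : B → ι), Monotone f → Monotone g → ∀ {m : ℕ}
    (P : Fin m → Set A) (Q : Fin m → Set B),
    (∀ i : ι, th n (resP (f ⁻¹' {i}) P) = th n (resP (g ⁻¹' {i}) Q)) →
    th n P = th n Q

section SumAux

variable {ι : Type v} {A B : Type u} [LinearOrder ι] [LinearOrder A] [LinearOrder B]
  (f : A → ι) (g : B → ι)

lemma mono_lt_of_lt {f : A → ι} (hf : Monotone f) {x y : A} (hxy : f x < f y) : x < y := by
  by_contra hc
  exact absurd (hf (not_lt.mp hc)) (not_le.mpr hxy)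

lemma sum_lt_aux (hf : Monotone f) (hg : Monotone g) {m : ℕ}
    (P : Fin m → Set A) (Q : Fin m → Set B)
    (h : ∀ i : ι, th 0 (resP (f ⁻¹' {i}) P) = th 0 (resP (g ⁻¹' {i}) Q))
    (i j : Fin m) (hx : ∃ x ∈ P i, ∃ y ∈ P j, x < y) : ∃ x ∈ Q i, ∃ y ∈ Q j, x < y := by
  obtain ⟨x, hxi, y, hyj, hxy⟩ := hx
  rcases eq_or_lt_of_le (hf hxy.le) with heq | hlt
  · -- same fiber
    have h1 : (∃ u ∈ resP (f ⁻¹' {f x}) P i, ∃ v ∈ resP (f ⁻¹' {f x}) P j, u < v)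
        = (∃ u ∈ resP (g ⁻¹' {f x}) Q i, ∃ v ∈ resP (g ⁻¹' {f x}) Q j, u < v) :=
      congrArg (fun t => t.1 i j) (h (f x))
    have mem : ∃ u ∈ resP (f ⁻¹' {f x}) P i, ∃ v ∈ resP (f ⁻¹' {f x}) P j, u < v := by
      refine ⟨⟨x, rfl⟩, hxi, ⟨y, heq.symm⟩, hyj, ?_⟩
      exact Subtype.mk_lt_mk.mpr hxy
    rw [h1] at mem
    obtain ⟨u, hu, v, hv, huv⟩ := mem
    exact ⟨u.val, hu, v.val, hv, huv⟩
  · -- different fibers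
    have h1 : (resP (f ⁻¹' {f x}) P i ∩ resP (f ⁻¹' {f x}) P i).Nonempty
        = (resP (g ⁻¹' {f x}) Q i ∩ resP (g ⁻¹' {f x}) Q i).Nonempty :=
      congrArg (fun t => t.2 i i) (h (f x))
    have h2 : (resP (f ⁻¹' {f y}) P j ∩ resP (f ⁻¹' {f y}) P j).Nonempty
        = (resP (g ⁻¹' {f y}) Q j ∩ resP (g ⁻¹' {f y}) Q j).Nonempty :=
      congrArg (fun t => t.2 j j) (h (f y))
    have mem1 : (resP (f ⁻¹' {f x}) P i ∩ resP (f ⁻¹' {f x}) P i).Nonempty := ⟨⟨x, rfl⟩, hxi, hxi⟩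
    have mem2 : (resP (f ⁻¹' {f y}) P j ∩ resP (f ⁻¹' {f y}) P j).Nonempty := ⟨⟨y, rfl⟩, hyj, hyj⟩
    rw [h1] at mem1; rw [h2] at mem2
    obtain ⟨u, hu, -⟩ := mem1
    obtain ⟨v, hv, -⟩ := mem2
    refine ⟨u.val, hu, v.val, hv, ?_⟩
    have hgu : g u.val = f x := u.prop
    have hgv : g v.val = f y := v.prop
    exact mono_lt_of_lt hg (by rw [hgu, hgv]; exact hlt)

lemma sum_ne_aux (hf : Monotone f) (hg : Monotone g) {m : ℕ}
    (P : Fin m → Set A) (Q : Fin m → Set B)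
    (h : ∀ i : ι, th 0 (resP (f ⁻¹' {i}) P) = th 0 (resP (g ⁻¹' {i}) Q))
    (i j : Fin m) (hx : (P i ∩ P j).Nonempty) : (Q i ∩ Q j).Nonempty := by
  obtain ⟨x, hxi, hxj⟩ := hx
  have h1 : (resP (f ⁻¹' {f x}) P i ∩ resP (f ⁻¹' {f x}) P j).Nonempty
      = (resP (g ⁻¹' {f x}) Q i ∩ resP (g ⁻¹' {f x}) Q j).Nonempty :=
    congrArg (fun t => t.2 i j) (h (f x))
  have mem : (resP (f ⁻¹' {f x}) P i ∩ resP (f ⁻¹' {f x}) P j).Nonempty := ⟨⟨x, rfl⟩, hxi, hxj⟩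
  rw [h1] at mem
  obtain ⟨u, hu, hu'⟩ := mem
  exact ⟨u.val, hu, hu'⟩

lemma sum_elem_aux (n : ℕ) (IH : SumIH.{u, v} n)
    (hf : Monotone f) (hg : Monotone g) {m : ℕ}
    (P : Fin m → Set A) (Q : Fin m → Set B)
    (h : ∀ i : ι, th (n+1) (resP (f ⁻¹' {i}) P) = th (n+1) (resP (g ⁻¹' {i}) Q))
    (a : A) : ∃ b : B, th n (Fin.snoc P ({a} : Set A)) = th n (Fin.snoc Q ({b} : Set B)) := by
  classical
  have ha : a ∈ f ⁻¹' {f a} := rfl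
  have h3 := congrArg (fun t => t.2.2.1) (h (f a))
  have mem : th n (Fin.snoc (resP (f ⁻¹' {f a}) P) ({⟨a, ha⟩} : Set ↥(f ⁻¹' {f a})))
      ∈ {t | ∃ x : ↥(f ⁻¹' {f a}), t = th n (Fin.snoc (resP (f ⁻¹' {f a}) P) {x})} :=
    ⟨⟨a, ha⟩, rfl⟩
  rw [show (th (n+1) (resP (f ⁻¹' {f a}) P)).2.2.1
      = {t | ∃ x : ↥(f ⁻¹' {f a}), t = th n (Fin.snoc (resP (f ⁻¹' {f a}) P) {x})} from rfl] at h3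
  rw [h3] at mem
  obtain ⟨y, hy⟩ := mem
  refine ⟨y.val, ?_⟩
  apply IH f g hf hg (Fin.snoc P {a}) (Fin.snoc Q {y.val})
  intro i
  rw [resP_snoc, resP_snoc]
  by_cases hik : i = f a
  · subst hik
    have e1 : ((Subtype.val : ↥(f ⁻¹' {f a}) → A) ⁻¹' {a}) = {(⟨a, ha⟩ : ↥(f ⁻¹' {f a}))} := by
      ext x; simp [Subtype.ext_iff]
    have e2 : ((Subtype.val : ↥(g ⁻¹' {f a}) → B) ⁻¹' {y.val}) = {y} := by
      ext x; simp [Subtype.ext_iff]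
    rw [e1, e2]
    exact hy
  · have e1 : ((Subtype.val : ↥(f ⁻¹' {i}) → A) ⁻¹' {a}) = (∅ : Set ↥(f ⁻¹' {i})) := by
      ext x
      simp only [Set.mem_preimage, Set.mem_singleton_iff, Set.mem_empty_iff_false, iff_false]
      intro hxa
      exact hik (by rw [← x.prop, hxa])
    have e2 : ((Subtype.val : ↥(g ⁻¹' {i}) → B) ⁻¹' {y.val}) = (∅ : Set ↥(g ⁻¹' {i})) := by
      ext x
      simp only [Set.mem_preimage, Set.mem_singleton_iff, Set.mem_empty_iff_false, iff_false]
      intro hxa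
      have : g x.val = i := x.prop
      have : g y.val = f a := y.prop
      exact hik (by rw [← ‹g x.val = i›, hxa, ‹g y.val = f a›])
    rw [e1, e2]
    exact congrArg (fun t => t.2.1) (h i)

lemma sum_set_aux (n : ℕ) (IH : SumIH.{u, v} n)
    (hf : Monotone f) (hg : Monotone g) {m : ℕ}
    (P : Fin m → Set A) (Q : Fin m → Set B)
    (h : ∀ i : ι, th (n+1) (resP (f ⁻¹' {i}) P) = th (n+1) (resP (g ⁻¹' {i}) Q))
    (A₀ : Set A) : ∃ B₀ : Set B, th n (Fin.snoc P A₀) = th n (Fin.snoc Q B₀) := by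
  classical
  have key : ∀ i : ι, ∃ X : Set ↥(g ⁻¹' {i}),
      th n (Fin.snoc (resP (f ⁻¹' {i}) P) ((Subtype.val) ⁻¹' A₀))
        = th n (Fin.snoc (resP (g ⁻¹' {i}) Q) X) := by
    intro i
    have h4 := congrArg (fun t => t.2.2.2) (h i)
    have mem : th n (Fin.snoc (resP (f ⁻¹' {i}) P) ((Subtype.val) ⁻¹' A₀))
        ∈ {t | ∃ X : Set ↥(f ⁻¹' {i}), t = th n (Fin.snoc (resP (f ⁻¹' {i}) P) X)} :=
      ⟨(Subtype.val) ⁻¹' A₀, rfl⟩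
    rw [show (th (n+1) (resP (f ⁻¹' {i}) P)).2.2.2
        = {t | ∃ X : Set ↥(f ⁻¹' {i}), t = th n (Fin.snoc (resP (f ⁻¹' {i}) P) X)} from rfl] at h4
    rw [h4] at mem
    obtain ⟨X, hX⟩ := mem
    exact ⟨X, hX⟩
  choose BB hBB using key
  refine ⟨{b : B | ⟨b, rfl⟩ ∈ BB (g b)}, ?_⟩
  apply IH f g hf hg (Fin.snoc P A₀) _
  intro i
  rw [resP_snoc, resP_snoc]
  have fib : ((Subtype.val : ↥(g ⁻¹' {i}) → B) ⁻¹' {b : B | ⟨b, rfl⟩ ∈ BB (g b)}) = BB i := by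
    ext x
    obtain ⟨b, hb⟩ := x
    have hgb : g b = i := hb
    subst hgb
    exact Iff.rfl
  rw [fib]
  exact hBB i

end SumAux

theorem th_sum : ∀ n : ℕ, SumIH.{u, v} n
  | 0 => by
    intro f g hf hg m P Q h
    refine congrArg₂ Prod.mk ?_ ?_ <;> funext i j <;> apply propext <;> constructor
    · exact sum_lt_aux f g hf hg P Q h i j
    · exact sum_lt_aux g f hg hf Q P (fun i => (h i).symm) i j
    · exact sum_ne_aux f g hf hg P Q h i j
    · exact sum_ne_aux g f hg hf Q P (fun i => (h i).symm) i j
  | (n+1) => by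
    intro f g hf hg m P Q h
    refine congrArg₂ Prod.mk ?_ (congrArg₂ Prod.mk ?_ (congrArg₂ Prod.mk ?_ ?_))
    · exact th_sum n f g hf hg P Q (fun i => congrArg (fun t => t.1) (h i))
    · apply th_sum n f g hf hg (Fin.snoc P ∅) (Fin.snoc Q ∅)
      intro i
      rw [resP_snoc, resP_snoc, Set.preimage_empty, Set.preimage_empty]
      exact congrArg (fun t => t.2.1) (h i)
    · ext t
      simp only [Set.mem_setOf_eq]
      constructor
      · rintro ⟨a, rfl⟩
        exact sum_elem_aux f g n (th_sum n) hf hg P Q h a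
      · rintro ⟨b, rfl⟩
        obtain ⟨a, ha⟩ := sum_elem_aux g f n (th_sum n) hg hf Q P (fun i => (h i).symm) b
        exact ⟨a, ha⟩
    · ext t
      simp only [Set.mem_setOf_eq]
      constructor
      · rintro ⟨A₀, rfl⟩
        exact sum_set_aux f g n (th_sum n) hf hg P Q h A₀
      · rintro ⟨B₀, rfl⟩
        obtain ⟨A₀, hA⟩ := sum_set_aux g f n (th_sum n) hg hf Q P (fun i => (h i).symm) B₀
        exact ⟨A₀, hA⟩

/-! ### Encoding environments as predicates, and determinacy -/

def encP {α : Type*} {m k l : ℕ} (P : Fin m → Set α) (e : Fin k → α) (s : Fin l → Set α) :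
    Fin (m + k + l) → Set α :=
  Fin.append (Fin.append P (fun i => {e i})) s

lemma encP_elem {α : Type*} {m k l : ℕ} (P : Fin m → Set α) (e : Fin k → α) (s : Fin l → Set α)
    (i : Fin k) : encP P e s (Fin.castAdd l (Fin.natAdd m i)) = {e i} := by
  simp [encP, Fin.append_left, Fin.append_right]

lemma encP_pred {α : Type*} {m k l : ℕ} (P : Fin m → Set α) (e : Fin k → α) (s : Fin l → Set α)
    (p : Fin m) : encP P e s (Fin.castAdd l (Fin.castAdd k p)) = P p := by
  simp [encP, Fin.append_left]

lemma encP_set {α : Type*} {m k l : ℕ} (P : Fin m → Set α) (e : Fin k → α) (s : Fin l → Set α)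
    (X : Fin l) : encP P e s (Fin.natAdd (m+k) X) = s X := by
  simp [encP, Fin.append_right]

def insE (m k l : ℕ) : Fin (m + (k+1) + l) → Fin (m + k + l + 1) :=
  Fin.append (Fin.append (fun p : Fin m => (Fin.castAdd l (Fin.castAdd k p)).castSucc)
      (Fin.cons (Fin.last (m+k+l)) (fun i : Fin k => (Fin.castAdd l (Fin.natAdd m i)).castSucc)))
    (fun X : Fin l => ((Fin.natAdd (m+k) X)).castSucc)

def insS (m k l : ℕ) : Fin (m + k + (l+1)) → Fin (m + k + l + 1) :=
  Fin.append (fun q : Fin (m+k) => (Fin.castAdd l q).castSucc)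
    (Fin.cons (Fin.last (m+k+l)) (fun X : Fin l => (Fin.natAdd (m+k) X).castSucc))

lemma encP_cons_elem {α : Type*} {m k l : ℕ} (P : Fin m → Set α) (e : Fin k → α)
    (s : Fin l → Set α) (a : α) :
    encP P (Fin.cons a e) s
      = fun x => (Fin.snoc (encP P e s) ({a} : Set α) : Fin (m+k+l+1) → Set α) (insE m k l x) := by
  funext x
  refine Fin.addCases ?_ ?_ x
  · intro y
    refine Fin.addCases ?_ ?_ y
    · intro p
      simp [encP, insE, Fin.append_left, Fin.snoc_castSucc]
    · intro i
      refine Fin.cases ?_ ?_ i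
      · simp [encP, insE, Fin.append_left, Fin.append_right, Fin.snoc_last]
      · intro i'
        simp [encP, insE, Fin.append_left, Fin.append_right, Fin.snoc_castSucc]
  · intro X
    simp [encP, insE, Fin.append_right, Fin.snoc_castSucc, -Fin.castSucc_natAdd]

lemma encP_cons_set {α : Type*} {m k l : ℕ} (P : Fin m → Set α) (e : Fin k → α)
    (s : Fin l → Set α) (A₀ : Set α) :
    encP P e (Fin.cons A₀ s)
      = fun x => (Fin.snoc (encP P e s) A₀ : Fin (m+k+l+1) → Set α) (insS m k l x) := by
  funext x
  refine Fin.addCases ?_ ?_ x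
  · intro q
    simp [encP, insS, Fin.append_left, Fin.snoc_castSucc]
  · intro X
    refine Fin.cases ?_ ?_ X
    · simp [encP, insS, Fin.append_left, Fin.append_right, Fin.snoc_last]
    · intro X'
      simp [encP, insS, Fin.append_left, Fin.append_right, Fin.snoc_castSucc, -Fin.castSucc_natAdd]

theorem sat_iff {m : ℕ} {k l : ℕ} (φ : MSO m k l) : ∀ (n : ℕ), φ.depth ≤ n →
    ∀ {A B : Type u} [LinearOrder A] [LinearOrder B]
      (P : Fin m → Set A) (Q : Fin m → Set B)
      (e : Fin k → A) (s : Fin l → Set A) (e' : Fin k → B) (s' : Fin l → Set B),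
      th n (encP P e s) = th n (encP Q e' s') →
      (φ.Sat P e s ↔ φ.Sat Q e' s') := by
  induction φ with
  | @lt k l i j =>
    intro n hd A B _ _ P Q e s e' s' hth
    have h0 : th 0 (encP P e s) = th 0 (encP Q e' s') := by
      rw [← th_zero n, ← th_zero n, hth]
    have hc : (∃ x ∈ encP P e s (Fin.castAdd l (Fin.natAdd m i)),
          ∃ y ∈ encP P e s (Fin.castAdd l (Fin.natAdd m j)), x < y)
        = (∃ x ∈ encP Q e' s' (Fin.castAdd l (Fin.natAdd m i)),
          ∃ y ∈ encP Q e' s' (Fin.castAdd l (Fin.natAdd m j)), x < y) :=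
      congrArg (fun t => t.1 (Fin.castAdd l (Fin.natAdd m i))
        (Fin.castAdd l (Fin.natAdd m j))) h0
    rw [encP_elem, encP_elem, encP_elem, encP_elem] at hc
    simp only [MSO.Sat]
    have := iff_of_eq hc
    simpa using this
  | @eq k l i j =>
    intro n hd A B _ _ P Q e s e' s' hth
    have h0 : th 0 (encP P e s) = th 0 (encP Q e' s') := by
      rw [← th_zero n, ← th_zero n, hth]
    have hc : (encP P e s (Fin.castAdd l (Fin.natAdd m i))
          ∩ encP P e s (Fin.castAdd l (Fin.natAdd m j))).Nonempty
        = (encP Q e' s' (Fin.castAdd l (Fin.natAdd m i))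
          ∩ encP Q e' s' (Fin.castAdd l (Fin.natAdd m j))).Nonempty :=
      congrArg (fun t => t.2 (Fin.castAdd l (Fin.natAdd m i))
        (Fin.castAdd l (Fin.natAdd m j))) h0
    rw [encP_elem, encP_elem, encP_elem, encP_elem] at hc
    simp only [MSO.Sat]
    have := iff_of_eq hc
    simpa [eq_comm] using this
  | @mem k l i X =>
    intro n hd A B _ _ P Q e s e' s' hth
    have h0 : th 0 (encP P e s) = th 0 (encP Q e' s') := by
      rw [← th_zero n, ← th_zero n, hth]
    have hc : (encP P e s (Fin.castAdd l (Fin.natAdd m i))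
          ∩ encP P e s (Fin.natAdd (m+k) X)).Nonempty
        = (encP Q e' s' (Fin.castAdd l (Fin.natAdd m i))
          ∩ encP Q e' s' (Fin.natAdd (m+k) X)).Nonempty :=
      congrArg (fun t => t.2 (Fin.castAdd l (Fin.natAdd m i)) (Fin.natAdd (m+k) X)) h0
    rw [encP_elem, encP_elem, encP_set, encP_set] at hc
    simp only [MSO.Sat]
    have := iff_of_eq hc
    simpa [Set.singleton_inter_nonempty] using this
  | @pred k l p i =>
    intro n hd A B _ _ P Q e s e' s' hth
    have h0 : th 0 (encP P e s) = th 0 (encP Q e' s') := by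
      rw [← th_zero n, ← th_zero n, hth]
    have hc : (encP P e s (Fin.castAdd l (Fin.castAdd k p))
          ∩ encP P e s (Fin.castAdd l (Fin.natAdd m i))).Nonempty
        = (encP Q e' s' (Fin.castAdd l (Fin.castAdd k p))
          ∩ encP Q e' s' (Fin.castAdd l (Fin.natAdd m i))).Nonempty :=
      congrArg (fun t => t.2 (Fin.castAdd l (Fin.castAdd k p))
        (Fin.castAdd l (Fin.natAdd m i))) h0
    rw [encP_pred, encP_pred, encP_elem, encP_elem] at hc
    simp only [MSO.Sat]
    have := iff_of_eq hc
    simpa [Set.inter_singleton_nonempty] using this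
  | @not k l φ ih =>
    intro n hd A B _ _ P Q e s e' s' hth
    simp only [MSO.Sat]
    exact not_congr (ih n hd P Q e s e' s' hth)
  | @and k l φ ψ ih1 ih2 =>
    intro n hd A B _ _ P Q e s e' s' hth
    simp only [MSO.Sat]
    have hd1 : φ.depth ≤ n := le_trans (le_max_left _ _) hd
    have hd2 : ψ.depth ≤ n := le_trans (le_max_right _ _) hd
    exact and_congr (ih1 n hd1 P Q e s e' s' hth) (ih2 n hd2 P Q e s e' s' hth)
  | @exElem k l φ ih =>
    intro n hd A B _ _ P Q e s e' s' hth
    cases n with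
    | zero => exact absurd hd (by simp [MSO.depth])
    | succ n' =>
      have hd' : φ.depth ≤ n' := by
        have : φ.depth + 1 ≤ n' + 1 := hd
        omega
      simp only [MSO.Sat]
      constructor
      · rintro ⟨a, hsat⟩
        have h3 : {t | ∃ x : A, t = th n' (Fin.snoc (encP P e s) ({x} : Set A))}
            = {t | ∃ y : B, t = th n' (Fin.snoc (encP Q e' s') ({y} : Set B))} :=
          congrArg (fun t => t.2.2.1) hth
        have hm : th n' (Fin.snoc (encP P e s) ({a} : Set A))
            ∈ {t | ∃ x : A, t = th n' (Fin.snoc (encP P e s) ({x} : Set A))} := ⟨a, rfl⟩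
        rw [h3] at hm
        obtain ⟨b, hb⟩ := hm
        refine ⟨b, (ih n' hd' P Q (Fin.cons a e) s (Fin.cons b e') s' ?_).mp hsat⟩
        rw [encP_cons_elem P e s a, encP_cons_elem Q e' s' b,
          th_reindex n' (insE m k l) (Fin.snoc (encP P e s) {a}),
          th_reindex n' (insE m k l) (Fin.snoc (encP Q e' s') {b}), hb]
      · rintro ⟨b, hsat⟩
        have h3 : {t | ∃ y : B, t = th n' (Fin.snoc (encP Q e' s') ({y} : Set B))}
            = {t | ∃ x : A, t = th n' (Fin.snoc (encP P e s) ({x} : Set A))} :=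
          (congrArg (fun t => t.2.2.1) hth).symm
        have hm : th n' (Fin.snoc (encP Q e' s') ({b} : Set B))
            ∈ {t | ∃ y : B, t = th n' (Fin.snoc (encP Q e' s') ({y} : Set B))} := ⟨b, rfl⟩
        rw [h3] at hm
        obtain ⟨a, ha⟩ := hm
        refine ⟨a, (ih n' hd' P Q (Fin.cons a e) s (Fin.cons b e') s' ?_).mpr hsat⟩
        rw [encP_cons_elem P e s a, encP_cons_elem Q e' s' b,
          th_reindex n' (insE m k l) (Fin.snoc (encP P e s) {a}),
          th_reindex n' (insE m k l) (Fin.snoc (encP Q e' s') {b}), ha]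
  | @exSet k l φ ih =>
    intro n hd A B _ _ P Q e s e' s' hth
    cases n with
    | zero => exact absurd hd (by simp [MSO.depth])
    | succ n' =>
      have hd' : φ.depth ≤ n' := by
        have : φ.depth + 1 ≤ n' + 1 := hd
        omega
      simp only [MSO.Sat]
      constructor
      · rintro ⟨A₀, hsat⟩
        have h4 : {t | ∃ X : Set A, t = th n' (Fin.snoc (encP P e s) X)}
            = {t | ∃ Y : Set B, t = th n' (Fin.snoc (encP Q e' s') Y)} :=
          congrArg (fun t => t.2.2.2) hth
        have hm : th n' (Fin.snoc (encP P e s) A₀)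
            ∈ {t | ∃ X : Set A, t = th n' (Fin.snoc (encP P e s) X)} := ⟨A₀, rfl⟩
        rw [h4] at hm
        obtain ⟨B₀, hB⟩ := hm
        refine ⟨B₀, (ih n' hd' P Q e (Fin.cons A₀ s) e' (Fin.cons B₀ s') ?_).mp hsat⟩
        rw [encP_cons_set P e s A₀, encP_cons_set Q e' s' B₀,
          th_reindex n' (insS m k l) (Fin.snoc (encP P e s) A₀),
          th_reindex n' (insS m k l) (Fin.snoc (encP Q e' s') B₀), hB]
      · rintro ⟨B₀, hsat⟩
        have h4 : {t | ∃ Y : Set B, t = th n' (Fin.snoc (encP Q e' s') Y)}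
            = {t | ∃ X : Set A, t = th n' (Fin.snoc (encP P e s) X)} :=
          (congrArg (fun t => t.2.2.2) hth).symm
        have hm : th n' (Fin.snoc (encP Q e' s') B₀)
            ∈ {t | ∃ Y : Set B, t = th n' (Fin.snoc (encP Q e' s') Y)} := ⟨B₀, rfl⟩
        rw [h4] at hm
        obtain ⟨A₀, hA⟩ := hm
        refine ⟨A₀, (ih n' hd' P Q e (Fin.cons A₀ s) e' (Fin.cons B₀ s') ?_).mpr hsat⟩
        rw [encP_cons_set P e s A₀, encP_cons_set Q e' s' B₀,
          th_reindex n' (insS m k l) (Fin.snoc (encP P e s) A₀),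
          th_reindex n' (insS m k l) (Fin.snoc (encP Q e' s') B₀), hA]

/-! ### Theories of ordinal intervals -/

noncomputable def thI (n : ℕ) {m : ℕ} (P : Fin m → Set Ordinal) (a b : Ordinal) : TT n m :=
  th n (resP (Set.Ico a b) P)

lemma th_subsub (n : ℕ) {m : ℕ} (P : Fin m → Set Ordinal) {c d a b : Ordinal}
    (S : Set ↥(Set.Ico c d))
    (hS : ∀ x : ↥(Set.Ico c d), x ∈ S ↔ (x : Ordinal) ∈ Set.Ico a b)
    (hsub : Set.Ico a b ⊆ Set.Ico c d) :
    th n (resP S (resP (Set.Ico c d) P)) = thI n P a b := by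
  let e : ↥S ≃o ↥(Set.Ico a b) :=
    { toFun := fun x => ⟨(x.val : Ordinal), (hS x.val).1 x.prop⟩
      invFun := fun y => ⟨⟨y.val, hsub y.prop⟩, (hS _).2 y.prop⟩
      left_inv := fun x => by apply Subtype.ext; apply Subtype.ext; rfl
      right_inv := fun y => rfl
      map_rel_iff' := Iff.rfl }
  have h := th_iso e n (resP (Set.Ico a b) P)
  have h2 : thI n P a b = th n (resP (Set.Ico a b) P) := rfl
  rw [h2, ← h]
  rfl

lemma thI_glue (n : ℕ) {m : ℕ} (P : Fin m → Set Ordinal) {a b c a' b' c' : Ordinal}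
    (hab : a ≤ b) (hbc : b ≤ c) (hab' : a' ≤ b') (hbc' : b' ≤ c')
    (e1 : thI n P a b = thI n P a' b') (e2 : thI n P b c = thI n P b' c') :
    thI n P a c = thI n P a' c' := by
  classical
  have key : ∀ (x y z : Ordinal), x ≤ y → y ≤ z →
      ∀ i : Bool, th n (resP ((fun w : ↥(Set.Ico x z) => decide (y ≤ (w : Ordinal))) ⁻¹' {i})
        (resP (Set.Ico x z) P)) = if i then thI n P y z else thI n P x y := by
    intro x y z hxy hyz i
    cases i
    · simp only [if_false, Bool.false_eq_true]
      apply th_subsub n P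
      · intro w
        simp only [Set.mem_preimage, Set.mem_singleton_iff, decide_eq_false_iff_not, not_le,
          Set.mem_Ico]
        exact ⟨fun hw => ⟨w.prop.1, hw⟩, fun hw => hw.2⟩
      · intro w hw
        exact ⟨hw.1, lt_of_lt_of_le hw.2 hyz⟩
    · simp only [if_true]
      apply th_subsub n P
      · intro w
        simp only [Set.mem_preimage, Set.mem_singleton_iff, decide_eq_true_eq, Set.mem_Ico]
        exact ⟨fun hw => ⟨hw, w.prop.2⟩, fun hw => hw.1⟩
      · intro w hw
        exact ⟨le_trans hxy hw.1, hw.2⟩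
  have mono : ∀ (x y z : Ordinal),
      Monotone (fun w : ↥(Set.Ico x z) => decide (y ≤ (w : Ordinal))) := by
    intro x y z w1 w2 h12
    by_cases hy : y ≤ (w1 : Ordinal)
    · show decide (y ≤ (w1 : Ordinal)) ≤ decide (y ≤ (w2 : Ordinal))
      have h2 : y ≤ (w2 : Ordinal) := le_trans hy h12
      simp [hy, h2]
    · show decide (y ≤ (w1 : Ordinal)) ≤ decide (y ≤ (w2 : Ordinal))
      have hd : decide (y ≤ (w1 : Ordinal)) = false := by simp [hy]
      rw [hd]
      exact Bool.false_le _
  apply th_sum n (fun w : ↥(Set.Ico a c) => decide (b ≤ (w : Ordinal)))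
    (fun w : ↥(Set.Ico a' c') => decide (b' ≤ (w : Ordinal)))
    (mono a b c) (mono a' b' c')
  intro i
  rw [key a b c hab hbc i, key a' b' c' hab' hbc' i]
  cases i
  · simpa using e1
  · simpa using e2

lemma thI_omega (n : ℕ) {m : ℕ} (P : Fin m → Set Ordinal) {β γ β' γ' : Ordinal}
    (u v : ℕ → Ordinal)
    (hu : StrictMono u) (hv : StrictMono v)
    (hβu : β < u 0) (hβv : β' < v 0)
    (huγ : ∀ k, u k < γ) (hvγ : ∀ k, v k < γ')
    (hucof : ∀ x, x < γ → ∃ k, x < u k) (hvcof : ∀ x, x < γ' → ∃ k, x < v k)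
    (h0 : thI n P β (u 0) = thI n P β' (v 0))
    (hk : ∀ k, thI n P (u k) (u (k+1)) = thI n P (v k) (v (k+1))) :
    thI n P β γ = thI n P β' γ' := by
  classical
  -- the fiber map
  have key : ∀ (b g : Ordinal) (w : ℕ → Ordinal), StrictMono w → b < w 0 → (∀ k, w k < g) →
      ∀ (hcof : ∀ x, x < g → ∃ k, x < w k),
      ∃ f : ↥(Set.Ico b g) → ℕ, Monotone f ∧
        (∀ i : ℕ, th n (resP (f ⁻¹' {i}) (resP (Set.Ico b g) P))
          = if i = 0 then thI n P b (w 0) else thI n P (w (i-1)) (w i)) := by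
    intro b g w hw hbw hwg hcof
    refine ⟨fun x => Nat.find (hcof x.val x.prop.2), ?_, ?_⟩
    · intro x y hxy
      apply Nat.find_min'
      exact lt_of_le_of_lt hxy (Nat.find_spec (hcof y.val y.prop.2))
    · intro i
      cases i with
      | zero =>
        simp only [if_pos rfl]
        apply th_subsub n P
        · intro x
          simp only [Set.mem_preimage, Set.mem_singleton_iff, Nat.find_eq_zero, Set.mem_Ico]
          exact ⟨fun hx => ⟨x.prop.1, hx⟩, fun hx => hx.2⟩
        · intro x hx
          exact ⟨hx.1, lt_trans hx.2 (hwg 0)⟩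
      | succ i' =>
        simp only [Nat.succ_ne_zero, if_false]
        apply th_subsub n P
        · intro x
          simp only [Set.mem_preimage, Set.mem_singleton_iff, Set.mem_Ico]
          constructor
          · intro hx
            have h1 : (x : Ordinal) < w (i'+1) := by
              have := Nat.find_spec (hcof x.val x.prop.2)
              rw [hx] at this
              simpa using this
            have h2 : ¬ ((x : Ordinal) < w i') := by
              have := Nat.find_min (hcof x.val x.prop.2) (m := i') (by omega)
              simpa [hx] using this
            exact ⟨le_of_not_gt h2, by simpa using h1⟩
          · intro hx
            rw [Nat.find_eq_iff]
            refine ⟨by simpa using hx.2, ?_⟩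
            intro j hj
            simp only [not_lt]
            calc w j ≤ w i' := hw.monotone (by omega)
            _ ≤ (x : Ordinal) := hx.1
        · intro x hx
          refine ⟨le_trans (le_of_lt hbw) (le_trans (hw.monotone (by omega : 0 ≤ i')) hx.1), ?_⟩
          exact lt_trans hx.2 (hwg (i'+1))
  obtain ⟨f, hfmono, hfib⟩ := key β γ u hu hβu huγ hucof
  obtain ⟨g, hgmono, hgib⟩ := key β' γ' v hv hβv hvγ hvcof
  apply th_sum n f g hfmono hgmono
  intro i
  rw [hfib i, hgib i]
  cases i with
  | zero => simpa using h0
  | succ i' => simpa using hk i'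

/-! ### Combinatorics: unbounded homogeneous sets for interval theories -/

lemma encP_nil {α : Type*} {m : ℕ} (R : Fin m → Set α) :
    encP R (fun i : Fin 0 => i.elim0) (fun i : Fin 0 => i.elim0) = R := by
  funext i
  refine Fin.addCases (fun j => ?_) (fun j => j.elim0) i
  refine Fin.addCases (fun p => ?_) (fun j => j.elim0) j
  have h := encP_pred R (fun i : Fin 0 => i.elim0) (fun i : Fin 0 => i.elim0) p
  rw [h]
  exact congrArg R (Fin.ext rfl)

lemma exists_omega_seq {γ : Ordinal} (hγ : γ.cof = Cardinal.aleph0) :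
    ∃ s : ℕ → Ordinal, (∀ k, s k < γ) ∧ (∀ y, y < γ → ∃ k, y ≤ s k) := by
  obtain ⟨F, hF⟩ := Ordinal.exists_fundamental_sequence γ
  have hord : γ.cof.ord = Ordinal.omega0 := by rw [hγ, Cardinal.ord_aleph0]
  refine ⟨fun k => F k (by rw [hord]; exact Ordinal.nat_lt_omega0 k), fun k => ?_, fun y hy => ?_⟩
  · have h := Ordinal.lt_blsub F (↑k) (by rw [hord]; exact Ordinal.nat_lt_omega0 k)
    rwa [hF.blsub_eq] at h
  · rw [← hF.blsub_eq] at hy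
    obtain ⟨i, hi, hle⟩ := Ordinal.lt_blsub_iff.mp hy
    have hio : i < Ordinal.omega0 := by rw [← hord]; exact hi
    obtain ⟨k, rfl⟩ := Ordinal.lt_omega0.mp hio
    exact ⟨k, hle⟩

lemma exists_unbounded_homogeneous (A : Ordinal) (hA : Cardinal.aleph0 < A.cof) (n : ℕ)
    {m : ℕ} (P : Fin m → Set Ordinal) :
    ∃ E : Set Ordinal, E ⊆ Set.Iio A ∧ (∀ β < A, ∃ x ∈ E, β < x) ∧
      (∀ x ∈ E, ∀ y ∈ E, ∀ x' ∈ E, ∀ y' ∈ E,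
        x < y → x' < y' → thI n P x y = thI n P x' y') := by
  classical
  have hlim : Order.IsSuccLimit A := Ordinal.aleph0_le_cof.mp hA.le
  set c : Ordinal → Ordinal → TT n m := fun x y => thI n P x y with hc
  have tail : ∀ x y z w : Ordinal, x ≤ z → y ≤ z → z ≤ w → c x z = c y z → c x w = c y w := by
    intro x y z w hxz hyz hzw hcz
    exact thI_glue n P hxz hzw hyz hzw hcz rfl
  set Rel : Ordinal → Ordinal → Prop :=
    fun x y => ∃ z, x ≤ z ∧ y ≤ z ∧ z < A ∧ c x z = c y z with hRel
  -- Step 1 : an element with unbounded Rel-class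
  have step1 : ∃ x₀, x₀ < A ∧ ∀ β, β < A → ∃ y, y < A ∧ β < y ∧ Rel x₀ y := by
    by_contra hno
    push_neg at hno
    have hno' : ∀ x₀, ∃ β, x₀ < A → (β < A ∧ ∀ y, y < A → β < y → ¬ Rel x₀ y) := by
      intro x₀
      by_cases hx : x₀ < A
      · obtain ⟨β, hβ, hy⟩ := hno x₀ hx
        refine ⟨β, fun _ => ⟨hβ, ?_⟩⟩
        intro y hyA hβy hrel
        obtain ⟨z, h1, h2, h3, h4⟩ := hrel
        exact absurd h4 (by have := hy y hyA hβy; exact fun hh => this ⟨z, h1, h2, h3, hh⟩)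
      · exact ⟨0, fun h => absurd h hx⟩
    choose bd hbd using hno'
    set a : ℕ → Ordinal := fun k => Nat.rec 0 (fun _ prev => max prev (bd prev) + 1) k with ha
    have hasucc : ∀ k, a (k+1) = max (a k) (bd (a k)) + 1 := fun k => rfl
    have haA : ∀ k, a k < A := by
      intro k; induction k with
      | zero => exact hlim.pos
      | succ k ih =>
        rw [hasucc, Ordinal.add_one_eq_succ]
        exact hlim.succ_lt (max_lt ih ((hbd (a k) ih).1))
    have hamono : StrictMono a := by
      apply strictMono_nat_of_lt_succ
      intro k
      rw [hasucc, Ordinal.add_one_eq_succ]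
      exact lt_of_le_of_lt (le_max_left _ _) (Order.lt_succ _)
    set N := Fintype.card (TT n m) with hN
    obtain ⟨i, j, hij, hcij⟩ := Fintype.exists_ne_map_eq_of_card_lt
      (fun i : Fin (N+1) => c (a i) (a (N+1))) (by simp [hN])
    have key : ∀ i j : Fin (N+1), (i : ℕ) < (j : ℕ) →
        c (a i) (a (N+1)) = c (a j) (a (N+1)) → False := by
      intro i j hlt heq
      have hrel : Rel (a i) (a j) := by
        refine ⟨a (N+1), ?_, ?_, haA (N+1), heq⟩
        · exact le_of_lt (hamono i.isLt)
        · exact le_of_lt (hamono j.isLt)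
      have hbj : bd (a i) < a j := by
        have h1 : bd (a i) < a ((i : ℕ)+1) := by
          rw [hasucc, Ordinal.add_one_eq_succ]
          exact lt_of_le_of_lt (le_max_right _ _) (Order.lt_succ _)
        exact lt_of_lt_of_le h1 (hamono.monotone (show (i : ℕ) + 1 ≤ (j : ℕ) by omega))
      exact (hbd (a i) (haA i)).2 (a j) (haA j) hbj hrel
    rcases lt_or_gt_of_ne (fun h : (i : ℕ) = (j : ℕ) => hij (Fin.ext h)) with h | h
    · exact key i j h hcij
    · exact key j i h hcij.symm
  obtain ⟨x₀, hx₀A, hx₀⟩ := step1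
  set C : Set Ordinal := {y | y < A ∧ Rel x₀ y} with hC
  have hzex : ∀ y, ∃ z, y ∈ C → (x₀ ≤ z ∧ y ≤ z ∧ z < A ∧ c x₀ z = c y z) := by
    intro y
    by_cases hy : y ∈ C
    · obtain ⟨z, hz⟩ := hy.2; exact ⟨z, fun _ => hz⟩
    · exact ⟨0, fun h => absurd h hy⟩
  choose zA hzA using hzex
  have agree : ∀ x, x ∈ C → ∀ w, zA x ≤ w → c x₀ w = c x w := by
    intro x hx w hw
    obtain ⟨h1, h2, h3, h4⟩ := hzA x hx
    exact tail x₀ x (zA x) w h1 h2 hw h4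
  -- fundamental sequence machinery
  obtain ⟨F, hF⟩ := Ordinal.exists_fundamental_sequence A
  set FE : Ordinal → Ordinal := fun i => if hi : i < A.cof.ord then F i hi else 0 with hFEdef
  have hFE_lt : ∀ i, i < A.cof.ord → FE i < A := by
    intro i hi
    simp only [hFEdef, dif_pos hi]
    rw [← hF.blsub_eq]; exact Ordinal.lt_blsub _ _ _
  have hFE_mono : ∀ i j, i < j → j < A.cof.ord → FE i < FE j := by
    intro i j hij hj
    have hi : i < A.cof.ord := lt_trans hij hj
    simp only [hFEdef, dif_pos hi, dif_pos hj]
    exact hF.strict_mono hi hj hij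
  have hFE_cof : ∀ x, x < A → ∃ i, i < A.cof.ord ∧ x ≤ FE i := by
    intro x hx
    rw [← hF.blsub_eq] at hx
    obtain ⟨i, hi, hle⟩ := Ordinal.lt_blsub_iff.mp hx
    exact ⟨i, hi, by simp only [hFEdef, dif_pos hi]; exact hle⟩
  -- next element of C above y
  have hψex : ∀ y, y < A → {t | t ∈ C ∧ y < t}.Nonempty := by
    intro y hy
    obtain ⟨t, htA, hyt, hrel⟩ := hx₀ y hy
    exact ⟨t, ⟨htA, hrel⟩, hyt⟩
  set ψ : Ordinal → Ordinal := fun y => sInf {t | t ∈ C ∧ y < t} with hψdef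
  have hψC : ∀ y, y < A → ψ y ∈ C ∧ y < ψ y := fun y hy => csInf_mem (hψex y hy)
  -- index upper bounds
  have hiubex : ∀ b, ∃ i, b < A → (i < A.cof.ord ∧ b ≤ FE i) := by
    intro b
    by_cases hb : b < A
    · obtain ⟨i, hi, hle⟩ := hFE_cof b hb
      exact ⟨i, fun _ => ⟨hi, hle⟩⟩
    · exact ⟨0, fun h => absurd h hb⟩
  choose iub hiub using hiubex
  -- the local sup of agreement points
  set eb : Ordinal → Ordinal :=
    fun b => Ordinal.bsup (Order.succ (iub b)) (fun i _ => zA (ψ (FE i))) with hebdef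
  have hcoford : Cardinal.aleph0 ≤ A.cof := hA.le
  have hordlim : Order.IsSuccLimit (A.cof.ord) := Cardinal.isSuccLimit_ord hcoford
  have hzAlt : ∀ i, i < A.cof.ord → zA (ψ (FE i)) < A := by
    intro i hi
    have hmem := (hψC (FE i) (hFE_lt i hi)).1
    exact (hzA _ hmem).2.2.1
  have he_lt : ∀ b, b < A → eb b < A := by
    intro b hb
    apply Ordinal.bsup_lt_ord
    · rw [← Cardinal.lt_ord]
      exact hordlim.succ_lt (hiub b hb).1
    · intro i hi
      have hi' : i < A.cof.ord := lt_of_le_of_lt (Order.lt_succ_iff.mp hi) (hiub b hb).1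
      exact hzAlt i hi'
  have he_bd : ∀ b, b < A → ∀ i, i < A.cof.ord → ψ (FE i) ≤ b → zA (ψ (FE i)) ≤ eb b := by
    intro b hb i hi hle
    have hisucc : i < Order.succ (iub b) := by
      rw [Order.lt_succ_iff]
      by_contra hgt
      push_neg at hgt
      have h1 : FE (iub b) < FE i := hFE_mono _ _ hgt hi
      have h2 : b ≤ FE (iub b) := (hiub b hb).2
      have h3 : FE i < ψ (FE i) := (hψC (FE i) (hFE_lt i hi)).2
      exact absurd hle (not_le.mpr (lt_of_le_of_lt h2 (lt_trans h1 h3)))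
    exact Ordinal.le_bsup _ i hisucc
  -- E0
  set E0 : Set Ordinal := {δ | δ < A ∧
      (∀ y, y < δ → ∃ i, i < A.cof.ord ∧ y < ψ (FE i) ∧ ψ (FE i) < δ) ∧
      (∀ i, i < A.cof.ord → ψ (FE i) < δ → zA (ψ (FE i)) < δ)} with hE0def
  have hE0unb : ∀ β, β < A → ∃ δ, δ ∈ E0 ∧ β < δ := by
    intro β hβ
    set a : ℕ → Ordinal := fun k => Nat.rec (β+1)
      (fun _ prev => max (max prev (eb prev)) (ψ (FE (iub prev))) + 1) k with ha
    have hasucc : ∀ k, a (k+1) = max (max (a k) (eb (a k))) (ψ (FE (iub (a k)))) + 1 :=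
      fun k => rfl
    have haA : ∀ k, a k < A := by
      intro k; induction k with
      | zero =>
        show β + 1 < A
        rw [Ordinal.add_one_eq_succ]; exact hlim.succ_lt hβ
      | succ k ih =>
        rw [hasucc, Ordinal.add_one_eq_succ]
        apply hlim.succ_lt
        have h1 : eb (a k) < A := he_lt _ ih
        have h2 : ψ (FE (iub (a k))) < A :=
          (hψC (FE (iub (a k))) (hFE_lt _ (hiub (a k) ih).1)).1.1
        exact max_lt (max_lt ih h1) h2
    have hamono : StrictMono a := by
      apply strictMono_nat_of_lt_succ
      intro k
      rw [hasucc, Ordinal.add_one_eq_succ]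
      exact lt_of_le_of_lt (le_trans (le_max_left _ _) (le_max_left _ _)) (Order.lt_succ _)
    set δ := ⨆ i, a i with hδdef
    have hδA : δ < A := by
      apply Ordinal.iSup_lt_ord_lift _ haA
      rw [Cardinal.mk_eq_aleph0 ℕ]
      simpa using hA
    have hle_δ : ∀ k, a k ≤ δ := fun k => Ordinal.le_iSup a k
    have hlt_δ : ∀ y, y < δ → ∃ k, y < a k := fun y hy => Ordinal.lt_iSup_iff.mp hy
    have hβδ : β < δ := by
      have h00 : β < a 0 := by
        show β < β + 1
        rw [Ordinal.add_one_eq_succ]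
        exact Order.lt_succ β
      exact lt_of_lt_of_le h00 (hle_δ 0)
    refine ⟨δ, ⟨hδA, ?_, ?_⟩, hβδ⟩
    · intro y hy
      obtain ⟨k, hk⟩ := hlt_δ y hy
      refine ⟨iub (a k), (hiub (a k) (haA k)).1, ?_, ?_⟩
      · have h1 : a k ≤ FE (iub (a k)) := (hiub (a k) (haA k)).2
        have h2 : FE (iub (a k)) < ψ (FE (iub (a k))) :=
          (hψC _ (hFE_lt _ (hiub (a k) (haA k)).1)).2
        exact lt_of_lt_of_le hk (le_trans h1 (le_of_lt h2))
      · have h3 : ψ (FE (iub (a k))) < a (k+1) := by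
          rw [hasucc, Ordinal.add_one_eq_succ]
          exact lt_of_le_of_lt (le_max_right _ _) (Order.lt_succ _)
        exact lt_of_lt_of_le h3 (hle_δ (k+1))
    · intro i hi hlt
      obtain ⟨k, hk⟩ := hlt_δ _ hlt
      have h1 : zA (ψ (FE i)) ≤ eb (a k) := he_bd (a k) (haA k) i hi (le_of_lt hk)
      have h2 : eb (a k) < a (k+1) := by
        rw [hasucc, Ordinal.add_one_eq_succ]
        exact lt_of_le_of_lt (le_trans (le_max_right _ _) (le_max_left _ _)) (Order.lt_succ _)
      exact lt_of_le_of_lt h1 (lt_of_lt_of_le h2 (hle_δ (k+1)))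
  -- next D-element
  set nxt : Ordinal → Ordinal :=
    fun δ => sInf {d | (∃ i, i < A.cof.ord ∧ d = ψ (FE i)) ∧ δ < d} with hnxtdef
  have hnxtex : ∀ δ, δ < A → {d | (∃ i, i < A.cof.ord ∧ d = ψ (FE i)) ∧ δ < d}.Nonempty := by
    intro δ hδ
    obtain ⟨i, hi, hle⟩ := hFE_cof δ hδ
    exact ⟨ψ (FE i), ⟨i, hi, rfl⟩, lt_of_le_of_lt hle (hψC _ (hFE_lt _ hi)).2⟩
  have hnxtmem : ∀ δ, δ < A → ((∃ i, i < A.cof.ord ∧ nxt δ = ψ (FE i)) ∧ δ < nxt δ) :=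
    fun δ hδ => csInf_mem (hnxtex δ hδ)
  set Gc : Ordinal → TT n m := fun δ => c δ (nxt δ) with hGc
  set Hc : Ordinal → TT n m := fun δ => c x₀ δ with hHc
  -- Claim A
  have hmain : ∀ a b : Ordinal, a ∈ E0 → b ∈ E0 → a < b →
      (a ≤ nxt a ∧ nxt a ≤ b ∧ c (nxt a) b = Hc b) := by
    intro a b ha hb hab
    obtain ⟨⟨i, hi, hnx⟩, hlt2⟩ := hnxtmem a ha.1
    obtain ⟨j, hj, haj, hjb⟩ := hb.2.1 a hab
    have hle : nxt a ≤ ψ (FE j) := csInf_le' ⟨⟨j, hj, rfl⟩, haj⟩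
    have hnb : nxt a < b := lt_of_le_of_lt hle hjb
    have hzb : zA (nxt a) < b := by
      rw [hnx]
      exact hb.2.2 i hi (hnx ▸ hnb)
    have hmemC : nxt a ∈ C := by
      rw [hnx]; exact (hψC _ (hFE_lt _ hi)).1
    exact ⟨le_of_lt hlt2, le_of_lt hnb, (agree (nxt a) hmemC b (le_of_lt hzb)).symm⟩
  have claimA : ∀ x y x' y', x ∈ E0 → y ∈ E0 → x' ∈ E0 → y' ∈ E0 → x < y → x' < y' →
      Gc x = Gc x' → Hc y = Hc y' → c x y = c x' y' := by
    intro x y x' y' hx hy hx' hy' hlt hlt' hG hH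
    obtain ⟨h1, h2, h3⟩ := hmain x y hx hy hlt
    obtain ⟨h1', h2', h3'⟩ := hmain x' y' hx' hy' hlt'
    refine thI_glue n P h1 h2 h1' h2' hG ?_
    exact h3.trans (hH.trans h3'.symm)
  -- Step 2 : pigeonhole on (G,H)
  have step2 : ∃ t : TT n m × TT n m, ∀ β, β < A →
      ∃ δ, δ ∈ E0 ∧ β < δ ∧ Gc δ = t.1 ∧ Hc δ = t.2 := by
    by_contra hno
    push_neg at hno
    have hno' : ∀ t : TT n m × TT n m, ∃ β, β < A ∧ ∀ δ, δ ∈ E0 → β < δ →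
        ¬(Gc δ = t.1 ∧ Hc δ = t.2) := by
      intro t
      obtain ⟨β, hβ, hforall⟩ := hno t
      refine ⟨β, hβ, ?_⟩
      intro δ hδ hβδ hpair
      obtain ⟨h1, h2⟩ := hpair
      exact (hforall δ hδ hβδ h1) h2
    choose bd2 hbd2 using hno'
    set B := Finset.univ.sup bd2 with hB
    have hBA : B < A := by
      rw [hB]
      apply (Finset.sup_lt_iff hlim.pos).mpr
      intro t _
      exact (hbd2 t).1
    obtain ⟨δ, hδ, hBδ⟩ := hE0unb B hBA
    have hle : bd2 (Gc δ, Hc δ) ≤ B := Finset.le_sup (Finset.mem_univ _)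
    exact (hbd2 (Gc δ, Hc δ)).2 δ hδ (lt_of_le_of_lt hle hBδ) ⟨rfl, rfl⟩
  obtain ⟨t₀, hgh⟩ := step2
  refine ⟨{δ | δ ∈ E0 ∧ Gc δ = t₀.1 ∧ Hc δ = t₀.2}, ?_, ?_, ?_⟩
  · intro δ hδ
    exact hδ.1.1
  · intro β hβ
    obtain ⟨δ, h1, h2, h3, h4⟩ := hgh β hβ
    exact ⟨δ, ⟨h1, h3, h4⟩, h2⟩
  · intro x hx y hy x' hx' y' hy' hxy hxy'
    exact claimA x y x' y' hx.1 hy.1 hx'.1 hy'.1 hxy hxy'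
      (hx.2.1.trans hx'.2.1.symm) (hy.2.2.trans hy'.2.2.symm)


/-- (Shelah, Lemma 4.1.) If `cf α > ω` and `P₁,…,Pₘ ⊆ α`, then there is a club `J ⊆ α`
such that, for each `β < α`, all restrictions of `(α,<,P̄)` to intervals `[β,γ)` with
`γ ∈ J`, `cf γ = ω`, `γ > β` satisfy the same monadic sentences. -/
theorem exists_club_same_monadic_theory_of_tails
    (α : Ordinal) (hα : Cardinal.aleph0 < α.cof) (m : ℕ)
    (P : Fin m → Set Ordinal) (hP : ∀ i, P i ⊆ Set.Iio α) :
    ∃ J : Set Ordinal, J ⊆ Set.Iio α ∧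
      (∀ β < α, ∃ x ∈ J, β < x) ∧
      (∀ x < α, Order.IsSuccLimit x → (∀ y < x, ∃ z ∈ J, y < z ∧ z < x) → x ∈ J) ∧
      ∀ β < α, ∀ γ₁ ∈ J, ∀ γ₂ ∈ J,
        γ₁.cof = Cardinal.aleph0 → γ₂.cof = Cardinal.aleph0 →
        β < γ₁ → β < γ₂ →
        ∀ φ : MSO m 0 0,
          MSO.SatS (α := ↥(Set.Ico β γ₁))
            (fun i => {x : ↥(Set.Ico β γ₁) | (x : Ordinal) ∈ P i}) φ ↔
          MSO.SatS (α := ↥(Set.Ico β γ₂))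
            (fun i => {x : ↥(Set.Ico β γ₂) | (x : Ordinal) ∈ P i}) φ := by
  classical
  have hlim : Order.IsSuccLimit α := Ordinal.aleph0_le_cof.mp hα.le
  have hEex : ∀ n : ℕ, ∃ E : Set Ordinal, E ⊆ Set.Iio α ∧ (∀ β < α, ∃ x ∈ E, β < x) ∧
      (∀ x ∈ E, ∀ y ∈ E, ∀ x' ∈ E, ∀ y' ∈ E, x < y → x' < y' → thI n P x y = thI n P x' y') :=
    fun n => exists_unbounded_homogeneous α hα n P
  choose E hE1 hE2 hE3 using hEex
  have hpickex : ∀ (n : ℕ) (b : Ordinal), ∃ z, b < α → (z ∈ E n ∧ b < z) := by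
    intro n b
    by_cases hb : b < α
    · obtain ⟨z, hz1, hz2⟩ := hE2 n b hb
      exact ⟨z, fun _ => ⟨hz1, hz2⟩⟩
    · exact ⟨0, fun h => absurd h hb⟩
  choose pk hpk using hpickex
  refine ⟨{γ | γ < α ∧ ∀ n : ℕ, ∀ y, y < γ → ∃ z ∈ E n, y < z ∧ z < γ}, ?_, ?_, ?_, ?_⟩
  · intro γ hγ
    exact hγ.1
  · -- unbounded
    intro β hβ
    set a : ℕ → Ordinal := fun k => Nat.rec (β+1)
      (fun k prev => (Finset.range (k+1)).sup (fun j => pk j prev) + 1) k with ha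
    have hasucc : ∀ k, a (k+1) = (Finset.range (k+1)).sup (fun j => pk j (a k)) + 1 :=
      fun k => rfl
    have haA : ∀ k, a k < α := by
      intro k; induction k with
      | zero => show β + 1 < α; rw [Ordinal.add_one_eq_succ]; exact hlim.succ_lt hβ
      | succ k ih =>
        rw [hasucc, Ordinal.add_one_eq_succ]
        apply hlim.succ_lt
        apply (Finset.sup_lt_iff hlim.pos).mpr
        intro j _
        exact hE1 j (hpk j (a k) ih).1
    have hamono : StrictMono a := by
      apply strictMono_nat_of_lt_succ
      intro k
      rw [hasucc, Ordinal.add_one_eq_succ]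
      have h1 : a k < pk k (a k) := (hpk k (a k) (haA k)).2
      have h2 : pk k (a k) ≤ (Finset.range (k+1)).sup (fun j => pk j (a k)) :=
        Finset.le_sup (f := fun j => pk j (a k)) (Finset.self_mem_range_succ k)
      exact lt_of_lt_of_le (lt_of_lt_of_le h1 h2) (le_of_lt (Order.lt_succ _))
    set δ := ⨆ i, a i with hδ
    have hδα : δ < α := by
      apply Ordinal.iSup_lt_ord_lift _ haA
      rw [Cardinal.mk_eq_aleph0 ℕ]; simpa using hα
    have hle_δ : ∀ k, a k ≤ δ := fun k => Ordinal.le_iSup a k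
    have hβa0 : β < a 0 := by
      show β < β + 1
      rw [Ordinal.add_one_eq_succ]
      exact Order.lt_succ β
    refine ⟨δ, ⟨hδα, ?_⟩, lt_of_lt_of_le hβa0 (hle_δ 0)⟩
    intro n y hy
    obtain ⟨k, hk⟩ := Ordinal.lt_iSup_iff.mp hy
    set k' := max k n with hk'
    refine ⟨pk n (a k'), (hpk n (a k') (haA k')).1, ?_, ?_⟩
    · exact lt_of_lt_of_le hk (le_trans (hamono.monotone (le_max_left k n))
        (le_of_lt (hpk n (a k') (haA k')).2))
    · have h2 : pk n (a k') ≤ (Finset.range (k'+1)).sup (fun j => pk j (a k')) :=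
        Finset.le_sup (f := fun j => pk j (a k')) (Finset.mem_range.mpr (Nat.lt_succ_of_le (le_max_right k n)))
      have h3 : (Finset.range (k'+1)).sup (fun j => pk j (a k')) < a (k'+1) := by
        rw [hasucc, Ordinal.add_one_eq_succ]; exact Order.lt_succ _
      exact lt_of_le_of_lt h2 (lt_of_lt_of_le h3 (hle_δ (k'+1)))
  · -- closed
    intro x hxα hxlim hcl
    refine ⟨hxα, ?_⟩
    intro n y hy
    obtain ⟨z, hzJ, hyz, hzx⟩ := hcl y hy
    obtain ⟨w, hw1, hw2, hw3⟩ := hzJ.2 n y hyz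
    exact ⟨w, hw1, hw2, lt_trans hw3 hzx⟩
  · -- main property
    intro β hβ γ₁ hγ₁ γ₂ hγ₂ hcof₁ hcof₂ hβγ₁ hβγ₂ φ
    set n := φ.depth with hn
    have hne : {z | z ∈ E n ∧ β < z}.Nonempty := by
      obtain ⟨z, h1, h2⟩ := hE2 n β hβ
      exact ⟨z, h1, h2⟩
    set δ₀ := sInf {z | z ∈ E n ∧ β < z} with hδ₀
    have hδ₀mem : δ₀ ∈ E n ∧ β < δ₀ := csInf_mem hne
    have chain : ∀ γ : Ordinal,
        γ ∈ {γ | γ < α ∧ ∀ n : ℕ, ∀ y, y < γ → ∃ z ∈ E n, y < z ∧ z < γ} →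
        γ.cof = Cardinal.aleph0 → β < γ →
        ∃ u : ℕ → Ordinal, u 0 = δ₀ ∧ StrictMono u ∧ (∀ k, u k ∈ E n) ∧ (∀ k, u k < γ) ∧
          (∀ x, x < γ → ∃ k, x < u k) := by
      intro γ hγ hcof hβγ
      obtain ⟨s, hs1, hs2⟩ := exists_omega_seq hcof
      have hδ₀γ : δ₀ < γ := by
        obtain ⟨z, hz1, hz2, hz3⟩ := hγ.2 n β hβγ
        exact lt_of_le_of_lt (csInf_le' ⟨hz1, hz2⟩) hz3
      have hpickex2 : ∀ b, ∃ z, b < γ → (z ∈ E n ∧ b < z ∧ z < γ) := by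
        intro b
        by_cases hb : b < γ
        · obtain ⟨z, h1, h2, h3⟩ := hγ.2 n b hb
          exact ⟨z, fun _ => ⟨h1, h2, h3⟩⟩
        · exact ⟨0, fun h => absurd h hb⟩
      choose pk2 hpk2 using hpickex2
      set u : ℕ → Ordinal := fun k => Nat.rec δ₀ (fun k prev => pk2 (max prev (s k))) k with hu
      have husucc : ∀ k, u (k+1) = pk2 (max (u k) (s k)) := fun k => rfl
      have huγ : ∀ k, u k < γ := by
        intro k; induction k with
        | zero => exact hδ₀γ
        | succ k ih =>
          rw [husucc]
          exact (hpk2 _ (max_lt ih (hs1 k))).2.2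
      have humono : StrictMono u := by
        apply strictMono_nat_of_lt_succ
        intro k
        rw [husucc]
        exact lt_of_le_of_lt (le_max_left _ _) (hpk2 _ (max_lt (huγ k) (hs1 k))).2.1
      refine ⟨u, rfl, humono, ?_, huγ, ?_⟩
      · intro k
        cases k with
        | zero => exact hδ₀mem.1
        | succ k =>
          rw [husucc]
          exact (hpk2 _ (max_lt (huγ k) (hs1 k))).1
      · intro x hx
        obtain ⟨k, hk⟩ := hs2 x hx
        refine ⟨k+1, lt_of_le_of_lt hk ?_⟩
        rw [husucc]
        exact lt_of_le_of_lt (le_max_right _ _) (hpk2 _ (max_lt (huγ k) (hs1 k))).2.1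
    obtain ⟨u, hu0, humono, huE, huγ, hucof⟩ := chain γ₁ hγ₁ hcof₁ hβγ₁
    obtain ⟨v, hv0, hvmono, hvE, hvγ, hvcof⟩ := chain γ₂ hγ₂ hcof₂ hβγ₂
    have hthI : thI n P β γ₁ = thI n P β γ₂ := by
      apply thI_omega n P u v humono hvmono (by rw [hu0]; exact hδ₀mem.2)
        (by rw [hv0]; exact hδ₀mem.2) huγ hvγ hucof hvcof
      · rw [hu0, hv0]
      · intro k
        exact hE3 n (u k) (huE k) (u (k+1)) (huE (k+1)) (v k) (hvE k) (v (k+1)) (hvE (k+1))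
          (humono (Nat.lt_succ_self k)) (hvmono (Nat.lt_succ_self k))
    have henc : th n (encP (fun i => {x : ↥(Set.Ico β γ₁) | (x : Ordinal) ∈ P i})
          (fun i : Fin 0 => i.elim0) (fun i : Fin 0 => i.elim0))
        = th n (encP (fun i => {x : ↥(Set.Ico β γ₂) | (x : Ordinal) ∈ P i})
          (fun i : Fin 0 => i.elim0) (fun i : Fin 0 => i.elim0)) := by
      rw [encP_nil, encP_nil]
      exact hthI
    exact sat_iff φ n le_rfl _ _ _ _ _ _ henc
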